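/- Let W be a real vector space, w1,w2,w3,w4 ∈ W, and for t ∈ [0,1] define the vectors w_i(t) by the 3-cyclic permutation homotopy (w1(t)=(1−t)w1+t·w2, w2(t)=(1−t)w2+t·w3, w3(t)=(1−t)w3+t·w1, w4(t)=w4). Then for each k ∈ {1,2,3,4}: the rank of (w1,w2,w3,w4) equals k if and only if the rank of (w1(t),w2(t),w3(t),w4(t)) equals k for every t ∈ [0,1]. -/

import Mathlib

private lemma mem_span4' {W : Type*} [AddCommGroup W] [Module ℝ W]
    (v1 v2 v3 v4 : W) (a b c d : ℝ) :
    a • v1 + b • v2 + c • v3 + d • v4 ∈ Submodule.span ℝ ({v1, v2, v3, v4} : Set W) := by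
  apply Submodule.add_mem
  apply Submodule.add_mem
  apply Submodule.add_mem
  all_goals exact Submodule.smul_mem _ _ (Submodule.subset_span (by simp))

private lemma span_eq_cyclic {W : Type*} [AddCommGroup W] [Module ℝ W]
    (w1 w2 w3 w4 : W) (t : ℝ) (ht : t ∈ Set.Icc (0:ℝ) 1) :
    Submodule.span ℝ
      ({(1 - t) • w1 + t • w2, (1 - t) • w2 + t • w3, (1 - t) • w3 + t • w1, w4} : Set W)
      = Submodule.span ℝ ({w1, w2, w3, w4} : Set W) := by
  have hd : (1 - t)^3 + t^3 ≠ 0 := by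
    obtain ⟨h0, h1⟩ := ht
    nlinarith [sq_nonneg (1 - t), sq_nonneg t, sq_nonneg (1 - 2*t)]
  apply le_antisymm <;> rw [Submodule.span_le] <;> rintro x hx <;>
    simp only [Set.mem_insert_iff, Set.mem_singleton_iff] at hx <;>
    rcases hx with h | h | h | h <;> rw [h, SetLike.mem_coe]
  · convert mem_span4' w1 w2 w3 w4 (1 - t) t 0 0 using 1; module
  · convert mem_span4' w1 w2 w3 w4 0 (1 - t) t 0 using 1; module
  · convert mem_span4' w1 w2 w3 w4 t 0 (1 - t) 0 using 1; module
  · exact Submodule.subset_span (by simp)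
  · convert mem_span4' ((1 - t) • w1 + t • w2) ((1 - t) • w2 + t • w3)
      ((1 - t) • w3 + t • w1) w4
      ((1-t)^2 / ((1-t)^3 + t^3)) (-((1-t)*t) / ((1-t)^3 + t^3))
      (t^2 / ((1-t)^3 + t^3)) 0 using 1
    match_scalars <;> field_simp <;> ring
  · convert mem_span4' ((1 - t) • w1 + t • w2) ((1 - t) • w2 + t • w3)
      ((1 - t) • w3 + t • w1) w4
      (t^2 / ((1-t)^3 + t^3)) ((1-t)^2 / ((1-t)^3 + t^3))
      (-((1-t)*t) / ((1-t)^3 + t^3)) 0 using 1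
    match_scalars <;> field_simp <;> ring
  · convert mem_span4' ((1 - t) • w1 + t • w2) ((1 - t) • w2 + t • w3)
      ((1 - t) • w3 + t • w1) w4
      (-((1-t)*t) / ((1-t)^3 + t^3)) (t^2 / ((1-t)^3 + t^3))
      ((1-t)^2 / ((1-t)^3 + t^3)) 0 using 1
    match_scalars <;> field_simp <;> ring
  · convert mem_span4' ((1 - t) • w1 + t • w2) ((1 - t) • w2 + t • w3)
      ((1 - t) • w3 + t • w1) w4 0 0 0 1 using 1
    module

theorem rank_eq_iff_cyclic_homotopy (W : Type*) [AddCommGroup W] [Module ℝ W]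
    [FiniteDimensional ℝ W] (w1 w2 w3 w4 : W) (k : ℕ) (hk : k ∈ Finset.Icc 1 4) :
    Module.finrank ℝ (Submodule.span ℝ {w1, w2, w3, w4}) = k ↔
      ∀ t ∈ Set.Icc (0:ℝ) 1,
        Module.finrank ℝ (Submodule.span ℝ
          {(1 - t) • w1 + t • w2, (1 - t) • w2 + t • w3, (1 - t) • w3 + t • w1, w4}) = k := by
  constructor
  · intro h t ht
    rw [span_eq_cyclic w1 w2 w3 w4 t ht]
    exact h
  · intro h
    rw [← span_eq_cyclic w1 w2 w3 w4 0 (by norm_num)]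
    exact h 0 (by norm_num)
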